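/- Let D be a real symmetric n×n matrix and P a diagonal n×n matrix with diagonal entries ±1 satisfying P D = −D P. Then for every integer m ≥ 1, the supertrace of the m-th power of the Laplacian vanishes: trace(P · (D²)^m) = 0. Consequently trace(P · exp(−t D²)) = trace(P) for all real t (McKean–Singer symmetry). -/

import Mathlib

open Matrix

/-- **McKean–Singer symmetry.**  If `D` is real symmetric and `P = diag(p)` with
`p i = ±1` satisfies `P D = -D P`, then the supertrace of every positive power of the
Laplacian `D²` vanishes: `tr(P (D²)^m) = 0` for `m ≥ 1`; consequently
`tr(P exp(-t D²)) = tr(P)` for all real `t`. -/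
theorem mckean_singer
    (n : ℕ) (D : Matrix (Fin n) (Fin n) ℝ) (hD : D.IsSymm)
    (p : Fin n → ℝ) (hp : ∀ i, p i = 1 ∨ p i = -1)
    (P : Matrix (Fin n) (Fin n) ℝ) (hP : P = Matrix.diagonal p)
    (hPD : P * D = -(D * P)) :
    (∀ m : ℕ, 1 ≤ m → (P * (D * D) ^ m).trace = 0) ∧
    (∀ t : ℝ, (P * NormedSpace.exp (-(t • (D * D)))).trace = P.trace) := by
  have key : ∀ m : ℕ, 1 ≤ m → (P * (D * D) ^ m).trace = 0 := by
    intro m hm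
    obtain ⟨k, rfl⟩ := Nat.exists_eq_add_of_le hm
    have hcomm : (D * D) ^ k * D = D * (D * D) ^ k :=
      (((Commute.refl D).mul_left (Commute.refl D)).pow_left k).eq
    have h1 : P * (D * D) ^ (1 + k) = -(D * (P * (D * (D * D) ^ k))) := by
      rw [pow_add, pow_one, mul_assoc D D _, ← mul_assoc P D _, hPD]
      simp [mul_assoc]
    have h2 : (D * (D * D) ^ k) * D = (D * D) ^ (1 + k) := by
      rw [mul_assoc, hcomm, pow_add, pow_one, mul_assoc]
    have : (P * (D * D) ^ (1 + k)).trace = -(P * (D * D) ^ (1 + k)).trace := by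
      calc (P * (D * D) ^ (1 + k)).trace
          = -(D * (P * (D * (D * D) ^ k))).trace := by rw [h1, trace_neg]
        _ = -((P * (D * (D * D) ^ k)) * D).trace := by rw [trace_mul_comm]
        _ = -(P * (D * D) ^ (1 + k)).trace := by rw [mul_assoc, h2]
    linarith
  refine ⟨key, fun t => ?_⟩
  letI : NormedRing (Matrix (Fin n) (Fin n) ℝ) := Matrix.linftyOpNormedRing
  letI : NormedAlgebra ℝ (Matrix (Fin n) (Fin n) ℝ) := Matrix.linftyOpNormedAlgebra
  set A : Matrix (Fin n) (Fin n) ℝ := -(t • (D * D)) with hA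
  have hsum : Summable fun k : ℕ => ((k.factorial : ℝ))⁻¹ • A ^ k :=
    NormedSpace.expSeries_summable' A
  let f : Matrix (Fin n) (Fin n) ℝ →ₗ[ℝ] ℝ :=
    (Matrix.traceLinearMap (Fin n) ℝ ℝ).comp (LinearMap.mulLeft ℝ P)
  let F : Matrix (Fin n) (Fin n) ℝ →L[ℝ] ℝ :=
    { toLinearMap := f, cont := f.continuous_of_finiteDimensional }
  have hF : ∀ M, F M = (P * M).trace := fun M => rfl
  rw [NormedSpace.exp_eq_tsum (𝕂 := ℝ)]
  have := F.map_tsum hsum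
  have hterm : ∀ k : ℕ, F (((k.factorial : ℝ))⁻¹ • A ^ k) = if k = 0 then P.trace else 0 := by
    intro k
    cases k with
    | zero => simp [hF]
    | succ k =>
      have hAk : A ^ (k + 1) = (-t) ^ (k + 1) • (D * D) ^ (k + 1) := by
        rw [hA, ← neg_smul, smul_pow]
      simp only [hF, Matrix.mul_smul, trace_smul, hAk, smul_eq_mul]
      rw [key (k + 1) (Nat.succ_le_succ (Nat.zero_le k))]
      simp
  calc (P * ∑' k : ℕ, ((k.factorial : ℝ))⁻¹ • A ^ k).trace
      = F (∑' k : ℕ, ((k.factorial : ℝ))⁻¹ • A ^ k) := (hF _).symm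
    _ = ∑' k : ℕ, F (((k.factorial : ℝ))⁻¹ • A ^ k) := this
    _ = ∑' k : ℕ, (if k = 0 then P.trace else 0) := by simp_rw [hterm]
    _ = P.trace := by rw [tsum_eq_single 0 (fun b hb => by simp [hb])]; simp
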